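/- Let s(t) = 1/(1+e^{-t}) be the sigmoid function. Let N be a finite index set, let e_j ≥ 0 be weights with ∑_{j∈N} e_j = 1, and let n_j be real numbers for j∈N. Then |s(∑_{j∈N} e_j n_j) - 1/2 - (1/4)∑_{j∈N} e_j n_j| ≤ (1/48)(∑_{j∈N} e_j |n_j|)^3. In particular, the contribution of the high-order (cubic) interaction terms of the neighborhood values n_j to the activated output has coefficient of magnitude at most 1/48. -/

import Mathlib

noncomputable def sigAux (t : ℝ) : ℝ := 1 / (1 + Real.exp (-t))

lemma sigAux_denom_pos (t : ℝ) : 0 < 1 + Real.exp (-t) := by positivity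

lemma hasDerivAt_sigAux (t : ℝ) :
    HasDerivAt sigAux (Real.exp (-t) / (1 + Real.exp (-t)) ^ 2) t := by
  have h1 : HasDerivAt (fun t : ℝ => 1 + Real.exp (-t)) (-Real.exp (-t)) t := by
    simpa using ((Real.hasDerivAt_exp (-t)).comp t ((hasDerivAt_id t).neg)).const_add 1
  have h2 := h1.inv (ne_of_gt (sigAux_denom_pos t))
  have : sigAux = fun t : ℝ => (1 + Real.exp (-t))⁻¹ := by
    funext t; simp [sigAux, one_div]
  rw [this]
  rw [neg_neg] at h2
  exact h2

lemma sigAux_deriv_eq (t : ℝ) :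
    Real.exp (-t) / (1 + Real.exp (-t)) ^ 2 = 1 / 4 - (sigAux t - 1 / 2) ^ 2 := by
  have h := (sigAux_denom_pos t).ne'
  simp only [sigAux]
  field_simp
  ring

lemma sigAux_zero : sigAux 0 = 1 / 2 := by simp [sigAux]; norm_num

lemma sigAux_neg (t : ℝ) : sigAux (-t) = 1 - sigAux t := by
  have h1 := (sigAux_denom_pos t).ne'
  have h2 := (sigAux_denom_pos (-t)).ne'
  have he : Real.exp (-t) * Real.exp t = 1 := by
    rw [← Real.exp_add]; simp
  simp only [sigAux]
  field_simp
  nlinarith [Real.exp_pos t, Real.exp_pos (-t)]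

lemma sigAux_diff : Differentiable ℝ sigAux :=
  fun t => (hasDerivAt_sigAux t).differentiableAt

-- |sig t - 1/2| ≤ |t|/4
lemma sigAux_lin_bound (t : ℝ) : |sigAux t - 1 / 2| ≤ |t| / 4 := by
  have key : ∀ x : ℝ, ‖deriv sigAux x‖ ≤ 1 / 4 := by
    intro x
    rw [(hasDerivAt_sigAux x).deriv]
    rw [Real.norm_eq_abs, abs_of_nonneg (by positivity)]
    rw [sigAux_deriv_eq]
    nlinarith [sq_nonneg (sigAux x - 1 / 2)]
  have := (convex_univ : Convex ℝ (Set.univ : Set ℝ)).norm_image_sub_le_of_norm_deriv_le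
    (fun x _ => sigAux_diff.differentiableAt)
    (fun x _ => key x) (Set.mem_univ 0) (Set.mem_univ t)
  simpa [sigAux_zero, Real.norm_eq_abs, abs_sub_comm, div_eq_mul_inv, mul_comm] using this

-- For t ≥ 0 : -t^3/48 ≤ sig t - 1/2 - t/4 ≤ 0
lemma sigAux_upper (t : ℝ) (ht : 0 ≤ t) : sigAux t - 1 / 2 - t / 4 ≤ 0 := by
  have hA : Antitone (fun t => sigAux t - 1 / 2 - t / 4) := by
    apply antitone_of_deriv_nonpos
    · exact (sigAux_diff.sub_const _).sub (differentiable_id.div_const 4)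
    · intro x
      have hd : HasDerivAt (fun t => sigAux t - 1 / 2 - t / 4)
          (Real.exp (-x) / (1 + Real.exp (-x)) ^ 2 - 1 / 4) x := by
        exact ((hasDerivAt_sigAux x).sub_const (1/2:ℝ)).sub
          ((hasDerivAt_id x).div_const 4)
      rw [hd.deriv, sigAux_deriv_eq]
      nlinarith [sq_nonneg (sigAux x - 1 / 2)]
  have := hA ht
  simpa [sigAux_zero] using this

lemma sigAux_lower (t : ℝ) (ht : 0 ≤ t) :
    -(t ^ 3 / 48) ≤ sigAux t - 1 / 2 - t / 4 := by
  set F : ℝ → ℝ := fun t => t ^ 3 / 48 + (sigAux t - 1 / 2 - t / 4) with hF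
  have hmono : MonotoneOn F (Set.Ici 0) := by
    apply monotoneOn_of_deriv_nonneg (convex_Ici 0)
    · exact (((continuous_pow 3).div_const 48).add
        ((sigAux_diff.continuous.sub continuous_const).sub
          (continuous_id.div_const 4))).continuousOn
    · intro x _
      exact ((((differentiable_pow 3).div_const 48).add
        ((sigAux_diff.sub_const _).sub (differentiable_id.div_const 4))) x).differentiableWithinAt
    · intro x hx
      rw [interior_Ici] at hx
      have hd : HasDerivAt F (3 * x ^ 2 / 48 +
          (Real.exp (-x) / (1 + Real.exp (-x)) ^ 2 - 1 / 4)) x := by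
        have h1 : HasDerivAt (fun t : ℝ => t ^ 3 / 48) (3 * x ^ 2 / 48) x := by
          simpa using (hasDerivAt_pow 3 x).div_const 48
        exact h1.add (((hasDerivAt_sigAux x).sub_const (1/2:ℝ)).sub
          ((hasDerivAt_id x).div_const 4))
      rw [hd.deriv, sigAux_deriv_eq]
      have hb := sigAux_lin_bound x
      rw [abs_of_nonneg (le_of_lt (Set.mem_Ioi.mp hx))] at hb
      nlinarith [abs_nonneg (sigAux x - 1 / 2), le_abs_self (sigAux x - 1/2),
        neg_abs_le (sigAux x - 1/2)]
  have := hmono (Set.self_mem_Ici) (Set.mem_Ici.mpr ht) ht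
  simp only [hF, sigAux_zero] at this
  norm_num at this
  linarith

lemma sigAux_cubic_bound (t : ℝ) :
    |sigAux t - 1 / 2 - t / 4| ≤ |t| ^ 3 / 48 := by
  rcases le_or_gt 0 t with ht | ht
  · rw [abs_of_nonneg ht]
    have h1 := sigAux_upper t ht
    have h2 := sigAux_lower t ht
    rw [abs_le]; constructor <;> linarith
  · have ht' : 0 ≤ -t := by linarith
    have h1 := sigAux_upper (-t) ht'
    have h2 := sigAux_lower (-t) ht'
    rw [sigAux_neg] at h1 h2
    rw [abs_of_neg ht, abs_le]
    constructor <;> nlinarith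

/-- Scalar form of Proposition 1: applying the sigmoid to a convex combination
`∑ j in N, e j * n j` of neighborhood values, the deviation from the linear
Taylor part is bounded by `(1/48) * (∑ j in N, e j * |n j|)^3`. -/
theorem sigmoid_convex_combination_interaction_bound
    (s : ℝ → ℝ) (hs : ∀ t, s t = 1 / (1 + Real.exp (-t)))
    {ι : Type*} (N : Finset ι) (e : ι → ℝ) (n : ι → ℝ)
    (he : ∀ j ∈ N, 0 ≤ e j) (hsum : ∑ j ∈ N, e j = 1) :
    |s (∑ j ∈ N, e j * n j) - 1 / 2 - (1 / 4) * ∑ j ∈ N, e j * n j| ≤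
      (1 / 48) * (∑ j ∈ N, e j * |n j|) ^ 3 := by
  set x := ∑ j ∈ N, e j * n j with hx
  set M := ∑ j ∈ N, e j * |n j| with hM
  have hxM : |x| ≤ M := by
    calc |x| ≤ ∑ j ∈ N, |e j * n j| := Finset.abs_sum_le_sum_abs _ _
      _ = M := by
        apply Finset.sum_congr rfl
        intro j hj
        rw [abs_mul, abs_of_nonneg (he j hj)]
  have hM0 : 0 ≤ M := le_trans (abs_nonneg x) hxM
  have key : |sigAux x - 1 / 2 - x / 4| ≤ |x| ^ 3 / 48 := sigAux_cubic_bound x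
  have hcube : |x| ^ 3 ≤ M ^ 3 := by
    apply pow_le_pow_left₀ (abs_nonneg x) hxM
  have hsx : s x = sigAux x := by rw [hs x]; rfl
  calc |s x - 1 / 2 - 1 / 4 * x| = |sigAux x - 1 / 2 - x / 4| := by
        rw [hsx]; ring_nf
    _ ≤ |x| ^ 3 / 48 := key
    _ ≤ M ^ 3 / 48 := by linarith
    _ = 1 / 48 * M ^ 3 := by ring
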